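/- Let A be a finite-dimensional commutative associative real algebra. If every right multiplication operator R_X is nilpotent, then the algebra A is nilpotent, i.e., there exists n such that every product of n elements of A vanishes. -/

import Mathlib

set_option maxHeartbeats 2000000
set_option synthInstance.maxHeartbeats 1000000


/-- A finite-dimensional commutative associative real algebra all of whose
right multiplication operators are nilpotent is a nilpotent algebra:
some `n ≥ 1` exists such that every product of `n` elements vanishes. -/
theorem stmt_2 (A : Type*) [AddCommGroup A] [Module ℝ A] [FiniteDimensional ℝ A]
    (mul : A →ₗ[ℝ] A →ₗ[ℝ] A)
    (hcomm : ∀ X Y : A, mul X Y = mul Y X)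
    (hassoc : ∀ X Y Z : A, mul (mul X Y) Z = mul X (mul Y Z))
    (hnil : ∀ X : A, IsNilpotent (mul.flip X)) :
    ∃ n : ℕ, 1 ≤ n ∧ ∀ (x : A) (l : List A), l.length = n - 1 →
      l.foldl (fun acc b => mul acc b) x = 0 := by
  classical
  set R : A →ₗ[ℝ] Module.End ℝ A := mul.flip with hR
  have hRmul : ∀ x y : A, R x * R y = R (mul y x) := by
    intro x y
    ext z
    simp [hR, Module.End.mul_apply, hassoc]
  have hcomm' : ∀ a ∈ Set.range R, ∀ b ∈ Set.range R, a * b = b * a := by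
    rintro _ ⟨x, rfl⟩ _ ⟨y, rfl⟩
    rw [hRmul, hRmul, hcomm]
  set B := Algebra.adjoin ℝ (Set.range R) with hB
  letI : CommRing B := Algebra.adjoinCommRingOfComm ℝ hcomm'
  haveI : IsNoetherianRing B := isNoetherian_of_tower ℝ inferInstance
  obtain ⟨n, hn⟩ := IsNoetherianRing.isNilpotent_nilradical B
  -- the embedding of A into B
  have hmem : ∀ x : A, R x ∈ B := fun x => Algebra.subset_adjoin (Set.mem_range_self x)
  set ρ : A → B := fun x => ⟨R x, hmem x⟩ with hρ
  have hρnil : ∀ x : A, ρ x ∈ nilradical B := by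
    intro x
    obtain ⟨k, hk⟩ := hnil x
    refine mem_nilradical.2 ⟨k, ?_⟩
    apply Subtype.ext
    rw [SubmonoidClass.coe_pow]
    exact hk
  -- products of elements of an ideal
  have hl : ∀ (l : List B), (∀ y ∈ l, y ∈ nilradical B) → l.prod ∈ nilradical B ^ l.length := by
    intro l
    induction l with
    | nil => intro _; simp
    | cons a l ih =>
      intro h
      rw [List.prod_cons, List.length_cons, pow_succ']
      exact Ideal.mul_mem_mul (h a List.mem_cons_self) (ih fun y hy => h y (List.mem_cons_of_mem a hy))
  -- coercion of products
  have hcoe : ∀ (l : List B), ((l.prod : B) : Module.End ℝ A) = (l.map Subtype.val).prod := by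
    intro l
    induction l with
    | nil => rfl
    | cons a l ih => rw [List.prod_cons, List.map_cons, List.prod_cons, ← ih]; rfl
  -- key : products of n operators vanish
  have key : ∀ l : List A, l.length = n → (l.map R).prod = 0 := by
    intro l hlen
    have h1 : (l.map ρ).prod ∈ nilradical B ^ n := by
      rw [← hlen, ← List.length_map ρ]
      exact hl _ (by rintro y hy; obtain ⟨x, _, rfl⟩ := List.mem_map.1 hy; exact hρnil x)
    rw [hn] at h1
    have h2 : (l.map ρ).prod = 0 := h1
    calc (l.map R).prod = ((l.map ρ).map Subtype.val).prod := by
          rw [List.map_map]; rfl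
      _ = (((l.map ρ).prod : B) : Module.End ℝ A) := (hcoe _).symm
      _ = 0 := by rw [h2]; rfl
  -- foldl as operator product
  have hfold : ∀ (l : List A) (x : A),
      l.foldl (fun acc b => mul acc b) x = ((l.map R).reverse.prod) x := by
    intro l
    induction l with
    | nil => intro x; simp
    | cons b l ih =>
      intro x
      rw [List.foldl_cons, ih, List.map_cons, List.reverse_cons, List.prod_append,
        List.prod_singleton, Module.End.mul_apply]
      rfl
  refine ⟨n + 1, Nat.le_add_left 1 n, fun x l hlen => ?_⟩
  simp only [Nat.add_sub_cancel] at hlen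
  rw [hfold, ← List.map_reverse, key l.reverse (by simp [hlen])]
  rfl
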